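/- arXiv:2003.04695 — 2 statements merged into one kernel-verified Lean document; each statement's English description precedes it below -/
import Mathlib

section
/- Define the strong H∞ norm of Tₐ at delays τ ∈ (ℝ₊)^m as ⦀Tₐ(τ)⦀∞ := lim_{ε→0⁺} sup { ‖Tₐ(·, τ_ε)‖∞ : τ_ε ∈ B(τ,ε) ∩ (ℝ⁺)^m }, where ‖Tₐ(·,r)‖∞ = sup_ω σ₁(Tₐ(iω, r)). Then ⦀Tₐ(τ)⦀∞ = max_{θ ∈ [0,2π]^m} σ₁(𝕋ₐ(θ)); in particular the strong H∞ norm of Tₐ is independent of the delay values τ. -/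
open Matrix Complex Filter Topology

/-- The largest singular value (Euclidean operator norm) of a complex matrix. -/
noncomputable def sigma1 {q p : ℕ} (M : Matrix (Fin q) (Fin p) ℂ) : ℝ :=
  ‖LinearMap.toContinuousLinearMap (Matrix.toEuclideanLin M)‖

/-- `𝕋ₐ(θ) = C₂ (−A₀^{(22)} − ∑ᵢ Aᵢ^{(22)} e^{−iθᵢ})⁻¹ B₂`. -/
noncomputable def asymTF {m p q : ℕ}
    (A0 : Matrix (Fin m) (Fin m) ℝ) (A : Fin m → Matrix (Fin m) (Fin m) ℝ)
    (B2 : Matrix (Fin m) (Fin p) ℝ) (C2 : Matrix (Fin q) (Fin m) ℝ)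
    (θ : Fin m → ℝ) : Matrix (Fin q) (Fin p) ℂ :=
  (C2.map Complex.ofReal) *
    (-(A0.map Complex.ofReal)
      - ∑ i, Complex.exp (-(θ i) * Complex.I) • (A i).map Complex.ofReal)⁻¹ *
    (B2.map Complex.ofReal)

/-- `Tₐ(λ, r) = −C₂ (A₀^{(22)} + ∑ᵢ Aᵢ^{(22)} e^{−λrᵢ})⁻¹ B₂`. -/
noncomputable def asymTFdelay {m p q : ℕ}
    (A0 : Matrix (Fin m) (Fin m) ℝ) (A : Fin m → Matrix (Fin m) (Fin m) ℝ)
    (B2 : Matrix (Fin m) (Fin p) ℝ) (C2 : Matrix (Fin q) (Fin m) ℝ)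
    (lam : ℂ) (r : Fin m → ℝ) : Matrix (Fin q) (Fin p) ℂ :=
  -((C2.map Complex.ofReal) *
      ((A0.map Complex.ofReal)
        + ∑ i, Complex.exp (-(lam * (r i))) • (A i).map Complex.ofReal)⁻¹ *
    (B2.map Complex.ofReal))

/- ### Auxiliary material -/

lemma matrix_inv_neg {n : ℕ} (M : Matrix (Fin n) (Fin n) ℂ) : (-M)⁻¹ = -M⁻¹ := by
  by_cases h : IsUnit M.det
  · refine Matrix.inv_eq_left_inv ?_
    simp [Matrix.nonsing_inv_mul _ h]
  · have h' : ¬ IsUnit (-M).det := by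
      rw [Matrix.det_neg]
      intro hu
      exact h (IsUnit.mul_iff.mp hu).2
    rw [Matrix.nonsing_inv_apply_not_isUnit _ h', Matrix.nonsing_inv_apply_not_isUnit _ h,
      neg_zero]

lemma sigma1_neg {q p : ℕ} (M : Matrix (Fin q) (Fin p) ℂ) : sigma1 (-M) = sigma1 M := by
  simp [sigma1, map_neg]

lemma continuous_sigma1 {q p : ℕ} : Continuous (fun M : Matrix (Fin q) (Fin p) ℂ => sigma1 M) := by
  have : Continuous (fun M : Matrix (Fin q) (Fin p) ℂ =>
      (LinearMap.toContinuousLinearMap (Matrix.toEuclideanLin M))) :=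
    LinearMap.continuous_of_finiteDimensional
      ((LinearMap.toContinuousLinearMap.toLinearMap.comp Matrix.toEuclideanLin.toLinearMap :
        Matrix (Fin q) (Fin p) ℂ →ₗ[ℂ] (EuclideanSpace ℂ (Fin p) →L[ℂ] EuclideanSpace ℂ (Fin q))))
  exact continuous_norm.comp this

/-- The argument vector on the torus. -/
noncomputable def eArg {m : ℕ} (θ : Fin m → ℝ) : Fin m → ℂ :=
  fun i => Complex.exp (-(θ i) * Complex.I)

lemma eArg_abs {m : ℕ} (θ : Fin m → ℝ) (i : Fin m) : ‖eArg θ i‖ = 1 := by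
  rw [eArg, show -((θ i : ℝ):ℂ) * Complex.I = ((-θ i : ℝ) : ℂ) * Complex.I by push_cast; ring,
    Complex.norm_exp_ofReal_mul_I]

lemma eArg_eq_of {m : ℕ} (θ η : Fin m → ℝ) (h : ∀ i, ∃ n : ℤ, η i = θ i + 2 * Real.pi * n) :
    eArg η = eArg θ := by
  funext i
  obtain ⟨n, hn⟩ := h i
  rw [eArg, eArg, hn,
    show -((θ i + 2*Real.pi*n : ℝ):ℂ) * Complex.I
        = -(θ i:ℂ)*Complex.I + ((-n : ℤ):ℂ) * (2*Real.pi*Complex.I) by push_cast; ring,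
    Complex.exp_add, Complex.exp_int_mul_two_pi_mul_I, mul_one]

/-- The matrix `A₀ + ∑ zᵢ Aᵢ` (complexified). -/
noncomputable def Pmat {m : ℕ} (A0 : Matrix (Fin m) (Fin m) ℝ)
    (A : Fin m → Matrix (Fin m) (Fin m) ℝ) (z : Fin m → ℂ) : Matrix (Fin m) (Fin m) ℂ :=
  (A0.map Complex.ofReal) + ∑ i, z i • (A i).map Complex.ofReal

/-- `σ₁(C (A₀+∑ zᵢAᵢ)⁻¹ B)`, a function of `z` on the torus. -/
noncomputable def gA {m p q : ℕ} (A0 : Matrix (Fin m) (Fin m) ℝ)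
    (A : Fin m → Matrix (Fin m) (Fin m) ℝ)
    (B2 : Matrix (Fin m) (Fin p) ℝ) (C2 : Matrix (Fin q) (Fin m) ℝ)
    (z : Fin m → ℂ) : ℝ :=
  sigma1 ((C2.map Complex.ofReal) * (Pmat A0 A z)⁻¹ * (B2.map Complex.ofReal))

noncomputable def hAux {m p q : ℕ} (A0 : Matrix (Fin m) (Fin m) ℝ)
    (A : Fin m → Matrix (Fin m) (Fin m) ℝ)
    (B2 : Matrix (Fin m) (Fin p) ℝ) (C2 : Matrix (Fin q) (Fin m) ℝ)
    (θ : Fin m → ℝ) : ℝ :=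
  gA A0 A B2 C2 (eArg θ)

noncomputable def PhiAux {m p q : ℕ} (A0 : Matrix (Fin m) (Fin m) ℝ)
    (A : Fin m → Matrix (Fin m) (Fin m) ℝ)
    (B2 : Matrix (Fin m) (Fin p) ℝ) (C2 : Matrix (Fin q) (Fin m) ℝ)
    (r : Fin m → ℝ) : ℝ :=
  ⨆ ω : ℝ, hAux A0 A B2 C2 (fun i => ω * r i)

lemma sigma1_asymTF {m p q : ℕ} (A0 : Matrix (Fin m) (Fin m) ℝ)
    (A : Fin m → Matrix (Fin m) (Fin m) ℝ)
    (B2 : Matrix (Fin m) (Fin p) ℝ) (C2 : Matrix (Fin q) (Fin m) ℝ) (θ : Fin m → ℝ) :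
    sigma1 (asymTF A0 A B2 C2 θ) = hAux A0 A B2 C2 θ := by
  rw [asymTF, show -(A0.map Complex.ofReal)
      - ∑ i, Complex.exp (-(θ i) * Complex.I) • (A i).map Complex.ofReal
      = -(Pmat A0 A (eArg θ)) by rw [Pmat]; simp [eArg, neg_add, sub_eq_add_neg]; abel,
    matrix_inv_neg, Matrix.mul_neg, Matrix.neg_mul, sigma1_neg]
  rfl

lemma sigma1_asymTFdelay {m p q : ℕ} (A0 : Matrix (Fin m) (Fin m) ℝ)
    (A : Fin m → Matrix (Fin m) (Fin m) ℝ)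
    (B2 : Matrix (Fin m) (Fin p) ℝ) (C2 : Matrix (Fin q) (Fin m) ℝ) (ω : ℝ) (r : Fin m → ℝ) :
    sigma1 (asymTFdelay A0 A B2 C2 ((ω : ℂ) * Complex.I) r)
      = hAux A0 A B2 C2 (fun i => ω * r i) := by
  have hz : ∀ i : Fin m, Complex.exp (-((ω:ℂ) * Complex.I * (r i : ℂ)))
      = eArg (fun i => ω * r i) i := by
    intro i
    rw [eArg]
    congr 1
    push_cast
    ring
  rw [asymTFdelay, sigma1_neg]
  simp only [hz]
  rfl

lemma continuous_hAux {m p q : ℕ} (A0 : Matrix (Fin m) (Fin m) ℝ)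
    (A : Fin m → Matrix (Fin m) (Fin m) ℝ)
    (B2 : Matrix (Fin m) (Fin p) ℝ) (C2 : Matrix (Fin q) (Fin m) ℝ)
    (hinv : ∀ z : Fin m → ℂ, (∀ i, ‖z i‖ = 1) →
      IsUnit ((A0.map Complex.ofReal) + ∑ i, z i • (A i).map Complex.ofReal)) :
    Continuous (hAux A0 A B2 C2) := by
  have hP : Continuous (fun z : Fin m → ℂ => Pmat A0 A z) :=
    continuous_const.add (continuous_finset_sum _ fun i _ =>
      (continuous_apply i).smul continuous_const)
  have he : Continuous (eArg (m := m)) :=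
    continuous_pi fun i => Complex.continuous_exp.comp
      ((Complex.continuous_ofReal.comp (continuous_apply i)).neg.mul continuous_const)
  have houter : Continuous (fun M : Matrix (Fin m) (Fin m) ℂ =>
      sigma1 ((C2.map Complex.ofReal) * M * (B2.map Complex.ofReal))) :=
    continuous_sigma1.comp ((continuous_const.matrix_mul continuous_id').matrix_mul
      continuous_const)
  rw [continuous_iff_continuousAt]
  intro θ
  have hu : IsUnit (Pmat A0 A (eArg θ)) := hinv _ (eArg_abs θ)
  have hd : (Pmat A0 A (eArg θ)).det ≠ 0 :=
    ((Matrix.isUnit_iff_isUnit_det _).mp hu).ne_zero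
  have hinvAt : ContinuousAt Inv.inv (Pmat A0 A (eArg θ)) := by
    apply continuousAt_matrix_inv
    rw [show (Ring.inverse : ℂ → ℂ) = Inv.inv from funext Ring.inverse_eq_inv]
    exact continuousAt_inv₀ hd
  have hPe : Continuous (fun θ : Fin m → ℝ => Pmat A0 A (eArg θ)) := hP.comp he
  have hPeAt : ContinuousAt (fun θ : Fin m → ℝ => Pmat A0 A (eArg θ)) θ := hPe.continuousAt
  have hmid : ContinuousAt (fun θ : Fin m → ℝ => (Pmat A0 A (eArg θ))⁻¹) θ :=
    ContinuousAt.comp (f := fun θ : Fin m → ℝ => Pmat A0 A (eArg θ)) hinvAt hPeAt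
  exact houter.continuousAt.comp hmid

/-- the strong H∞ norm of `Tₐ` at positive delays `τ`, defined as
`lim_{ε→0⁺} sup {‖Tₐ(·,r)‖∞ : r ∈ B(τ,ε) ∩ (ℝ⁺)^m}`, equals
`max_{θ∈[0,2π]^m} σ₁(𝕋ₐ(θ))`; in particular it is independent of `τ`. -/
theorem strong_hinfNorm_asymTF_eq_max_over_torus
    (m p q : ℕ)
    (A0 : Matrix (Fin m) (Fin m) ℝ) (A : Fin m → Matrix (Fin m) (Fin m) ℝ)
    (B2 : Matrix (Fin m) (Fin p) ℝ) (C2 : Matrix (Fin q) (Fin m) ℝ)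
    (hinv : ∀ z : Fin m → ℂ, (∀ i, ‖z i‖ = 1) →
      IsUnit ((A0.map Complex.ofReal) + ∑ i, z i • (A i).map Complex.ofReal))
    (τ : Fin m → ℝ) (hτpos : ∀ i, 0 < τ i) :
    Tendsto
      (fun ε : ℝ => sSup
        ((fun r => ⨆ ω : ℝ, sigma1 (asymTFdelay A0 A B2 C2 (ω * Complex.I) r)) ''
          (Metric.ball τ ε ∩ {r : Fin m → ℝ | ∀ i, 0 < r i})))
      (nhdsWithin 0 (Set.Ioi 0))
      (nhds (sSup ((fun θ => sigma1 (asymTF A0 A B2 C2 θ)) ''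
        Set.Icc (0 : Fin m → ℝ) (fun _ => 2 * Real.pi)))) := by
  have hπ : (0:ℝ) < Real.pi := Real.pi_pos
  -- rewrite both suprema in terms of `hAux` / `PhiAux`
  have hrw1 : (fun θ => sigma1 (asymTF A0 A B2 C2 θ)) = hAux A0 A B2 C2 :=
    funext (sigma1_asymTF A0 A B2 C2)
  have hrw2 : (fun r => ⨆ ω : ℝ, sigma1 (asymTFdelay A0 A B2 C2 (ω * Complex.I) r))
      = PhiAux A0 A B2 C2 := by
    funext r
    exact iSup_congr fun ω => sigma1_asymTFdelay A0 A B2 C2 ω r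
  rw [hrw1, hrw2]
  set K : Set (Fin m → ℝ) := Set.Icc (0 : Fin m → ℝ) (fun _ => 2 * Real.pi) with hK
  have hKc : IsCompact K := isCompact_Icc
  have hcont : Continuous (hAux A0 A B2 C2) := continuous_hAux A0 A B2 C2 hinv
  have hbddK : BddAbove (hAux A0 A B2 C2 '' K) := (hKc.image hcont).bddAbove
  have himK : (hAux A0 A B2 C2 '' K).Nonempty := by
    refine ⟨_, ⟨0, ⟨le_rfl, fun i => by positivity⟩, rfl⟩⟩
  set S : ℝ := sSup (hAux A0 A B2 C2 '' K) with hS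
  -- every value of `hAux` is at most `S`, by periodicity
  have hub : ∀ θ : Fin m → ℝ, hAux A0 A B2 C2 θ ≤ S := by
    intro θ
    set θ' : Fin m → ℝ := fun i => 2 * Real.pi * Int.fract (θ i / (2 * Real.pi)) with hθ'
    have hmem : θ' ∈ K := by
      constructor
      · intro i
        exact mul_nonneg (by positivity) (Int.fract_nonneg _)
      · intro i
        exact mul_le_of_le_one_right (by positivity) (Int.fract_lt_one _).le
    have heq : eArg θ = eArg θ' := by
      refine eArg_eq_of θ' θ fun i => ⟨⌊θ i / (2 * Real.pi)⌋, ?_⟩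
      have h2π : (2 * Real.pi) ≠ 0 := by positivity
      calc θ i = 2 * Real.pi * (θ i / (2 * Real.pi)) := by field_simp
      _ = 2 * Real.pi * (Int.fract (θ i / (2 * Real.pi)) + ⌊θ i / (2 * Real.pi)⌋) := by
          rw [Int.fract_add_floor]
      _ = θ' i + 2 * Real.pi * ⌊θ i / (2 * Real.pi)⌋ := by rw [hθ']; ring
    have : hAux A0 A B2 C2 θ = hAux A0 A B2 C2 θ' := by
      rw [hAux, hAux, heq]
    rw [this]
    exact le_csSup hbddK ⟨θ', hmem, rfl⟩
  have hFbdd : ∀ r : Fin m → ℝ,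
      BddAbove (Set.range fun ω : ℝ => hAux A0 A B2 C2 (fun i => ω * r i)) := by
    intro r
    exact ⟨S, by rintro x ⟨ω, rfl⟩; exact hub _⟩
  -- the key constant-value claim
  have key : ∀ ε : ℝ, 0 < ε →
      sSup (PhiAux A0 A B2 C2 '' (Metric.ball τ ε ∩ {r : Fin m → ℝ | ∀ i, 0 < r i})) = S := by
    intro ε hε
    have hne : (PhiAux A0 A B2 C2 ''
        (Metric.ball τ ε ∩ {r : Fin m → ℝ | ∀ i, 0 < r i})).Nonempty :=
      ⟨_, ⟨τ, ⟨Metric.mem_ball_self hε, hτpos⟩, rfl⟩⟩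
    have hubL : ∀ x ∈ PhiAux A0 A B2 C2 ''
        (Metric.ball τ ε ∩ {r : Fin m → ℝ | ∀ i, 0 < r i}), x ≤ S := by
      rintro x ⟨r, -, rfl⟩
      exact ciSup_le fun ω => hub _
    have hbddL : BddAbove (PhiAux A0 A B2 C2 ''
        (Metric.ball τ ε ∩ {r : Fin m → ℝ | ∀ i, 0 < r i})) := ⟨S, hubL⟩
    refine le_antisymm (csSup_le hne hubL) ?_
    refine csSup_le himK ?_
    rintro b ⟨θs, hθK, rfl⟩
    -- choose δ > 0 with δ ≤ ε and δ ≤ τ i for all i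
    obtain ⟨δ, hδ0, hδε, hδτ⟩ : ∃ δ : ℝ, 0 < δ ∧ δ ≤ ε ∧ ∀ i, δ ≤ τ i := by
      rcases isEmpty_or_nonempty (Fin m) with hm | hm
      · exact ⟨ε, hε, le_rfl, fun i => isEmptyElim i⟩
      · refine ⟨min ε (Finset.univ.inf' Finset.univ_nonempty τ),
          lt_min hε ?_, min_le_left _ _,
          fun i => (min_le_right _ _).trans (Finset.inf'_le _ (Finset.mem_univ i))⟩
        rw [Finset.lt_inf'_iff]
        exact fun i _ => hτpos i
    set ω₀ : ℝ := (Real.pi + 1) / δ with hω₀def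
    have hω₀ : 0 < ω₀ := by positivity
    have hπω : Real.pi / ω₀ < δ := by
      rw [hω₀def, div_div_eq_mul_div, div_lt_iff₀ (by positivity)]
      nlinarith
    set nn : Fin m → ℤ := fun i => round ((ω₀ * τ i - θs i) / (2 * Real.pi)) with hnn
    set r : Fin m → ℝ := fun i => (θs i + 2 * Real.pi * (nn i : ℝ)) / ω₀ with hr
    have hωr : ∀ i, ω₀ * r i = θs i + 2 * Real.pi * (nn i : ℝ) := by
      intro i
      rw [hr]
      field_simp
    have hre : eArg (fun i => ω₀ * r i) = eArg θs :=
      eArg_eq_of θs _ fun i => ⟨nn i, hωr i⟩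
    have hrd : ∀ i, |r i - τ i| ≤ Real.pi / ω₀ := by
      intro i
      set y : ℝ := (ω₀ * τ i - θs i) / (2 * Real.pi) with hy
      have hy2 : 2 * Real.pi * y = ω₀ * τ i - θs i := by
        rw [hy]; field_simp
      have hkey : (r i - τ i) * ω₀ = 2 * Real.pi * ((nn i : ℝ) - y) := by
        have h1 : r i * ω₀ = θs i + 2 * Real.pi * (nn i : ℝ) := by
          rw [hr]; field_simp
        rw [sub_mul, h1]
        linarith [hy2]
      have habs : |r i - τ i| * ω₀ ≤ 2 * Real.pi * (1/2) := by
        have h2 : |(r i - τ i) * ω₀| = |r i - τ i| * ω₀ := by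
          rw [abs_mul, abs_of_pos hω₀]
        rw [← h2, hkey, abs_mul, abs_of_pos (by positivity : (0:ℝ) < 2 * Real.pi)]
        have : |(nn i : ℝ) - y| ≤ 1/2 := by
          rw [abs_sub_comm, hnn]
          exact abs_sub_round y
        nlinarith [Real.pi_pos]
      rw [le_div_iff₀ hω₀]
      linarith
    have hball : r ∈ Metric.ball τ ε := by
      rw [Metric.mem_ball, dist_pi_lt_iff hε]
      intro i
      rw [Real.dist_eq]
      calc |r i - τ i| ≤ Real.pi / ω₀ := hrd i
      _ < δ := hπω
      _ ≤ ε := hδε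
    have hpos : ∀ i, 0 < r i := by
      intro i
      have h1 := hrd i
      have h2 := neg_abs_le (r i - τ i)
      have h3 := hδτ i
      linarith
    calc hAux A0 A B2 C2 θs = hAux A0 A B2 C2 (fun i => ω₀ * r i) := by
          rw [hAux, hAux, hre]
    _ ≤ PhiAux A0 A B2 C2 r := le_ciSup (hFbdd r) ω₀
    _ ≤ sSup (PhiAux A0 A B2 C2 '' (Metric.ball τ ε ∩ {r : Fin m → ℝ | ∀ i, 0 < r i})) :=
        le_csSup hbddL ⟨r, ⟨hball, hpos⟩, rfl⟩
  refine Tendsto.congr' ?_ tendsto_const_nhds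
  filter_upwards [self_mem_nhdsWithin] with ε hε
  exact (key ε hε).symm
end

section
/- Let ξ > 0 and let r = (r₁,…,rₘ) be positive delays. Then ξ is a singular value of T(iω, r) = C(iωE − A₀ − ∑ᵢ Aᵢ e^{−iωrᵢ})⁻¹B for some ω ∈ ℝ (for some singular value index k) if and only if λ = iω is a zero of the function λ ↦ det [ [λE − A₀ − ∑ Aᵢ e^{−λrᵢ}, −(1/ξ)BBᵀ]; [(1/ξ)CCᵀ, λEᵀ + A₀ᵀ + ∑ Aᵢᵀ e^{λrᵢ}] ]. -/
open Matrix Complex Filter Topology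

private lemma det_one_sub_smul_mul {k l : Type*} [Fintype k] [Fintype l]
    [DecidableEq k] [DecidableEq l] (a : ℂ) (X : Matrix k l ℂ) (Y : Matrix l k ℂ) :
    ((1 : Matrix k k ℂ) - a • (X * Y)).det = ((1 : Matrix l l ℂ) - a • (Y * X)).det := by
  have h := Matrix.det_one_add_mul_comm ((-a) • X) Y
  simpa [Matrix.smul_mul, Matrix.mul_smul, neg_smul, sub_eq_add_neg] using h

/-- Hamiltonian characterization of singular value crossings:
given positive delays `r` and `ξ > 0`, and given that the resolvent
`iωE − A₀ − ∑ Aᵢe^{−iωrᵢ}` is invertible, `ξ` is a singular value of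
`T(iω, r) = C(iωE − A₀ − ∑ᵢ Aᵢ e^{−iωrᵢ})⁻¹B` if and only if `λ = iω` is a
zero of `λ ↦ det [[λE − A₀ − ∑ Aᵢe^{−λrᵢ}, −(1/ξ)BBᵀ];
[(1/ξ)CᵀC, λEᵀ + A₀ᵀ + ∑ Aᵢᵀ e^{λrᵢ}]]`. -/
theorem singular_value_iff_hamiltonian_det_zero
    (n p q m : ℕ)
    (E A0 : Matrix (Fin n) (Fin n) ℝ) (A : Fin m → Matrix (Fin n) (Fin n) ℝ)
    (B : Matrix (Fin n) (Fin p) ℝ) (C : Matrix (Fin q) (Fin n) ℝ)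
    (r : Fin m → ℝ) (hr : ∀ i, 0 < r i) (ξ : ℝ) (hξ : 0 < ξ) (ω : ℝ)
    (hinv : IsUnit ((ω * Complex.I) • E.map Complex.ofReal
      - A0.map Complex.ofReal
      - ∑ i, Complex.exp (-(ω * Complex.I * (r i))) • (A i).map Complex.ofReal)) :
    (∃ v : Fin p → ℂ, v ≠ 0 ∧
      (((C.map Complex.ofReal) *
          ((ω * Complex.I) • E.map Complex.ofReal - A0.map Complex.ofReal
            - ∑ i, Complex.exp (-(ω * Complex.I * (r i))) •
                (A i).map Complex.ofReal)⁻¹ *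
          (B.map Complex.ofReal))ᴴ *
        ((C.map Complex.ofReal) *
          ((ω * Complex.I) • E.map Complex.ofReal - A0.map Complex.ofReal
            - ∑ i, Complex.exp (-(ω * Complex.I * (r i))) •
                (A i).map Complex.ofReal)⁻¹ *
          (B.map Complex.ofReal))) *ᵥ v = ((ξ : ℂ) ^ 2) • v) ↔
    (Matrix.fromBlocks
        ((ω * Complex.I) • E.map Complex.ofReal - A0.map Complex.ofReal
          - ∑ i, Complex.exp (-(ω * Complex.I * (r i))) •
              (A i).map Complex.ofReal)
        (-((1 / ξ : ℝ) : ℂ) • ((B.map Complex.ofReal) * (B.map Complex.ofReal)ᵀ))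
        (((1 / ξ : ℝ) : ℂ) • ((C.map Complex.ofReal)ᵀ * (C.map Complex.ofReal)))
        ((ω * Complex.I) • (E.map Complex.ofReal)ᵀ + (A0.map Complex.ofReal)ᵀ
          + ∑ i, Complex.exp (ω * Complex.I * (r i)) •
              ((A i).map Complex.ofReal)ᵀ)).det = 0 := by
  have hct : ∀ {a b : ℕ} (X : Matrix (Fin a) (Fin b) ℝ),
      (X.map Complex.ofReal)ᴴ = (X.map Complex.ofReal)ᵀ := by
    intro a b X
    ext i j
    simp [Matrix.conjTranspose_apply, Complex.conj_ofReal]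
  set M : Matrix (Fin n) (Fin n) ℂ :=
    (ω * Complex.I) • E.map Complex.ofReal - A0.map Complex.ofReal
      - ∑ i, Complex.exp (-(ω * Complex.I * (r i))) • (A i).map Complex.ofReal with hM
  set B' := B.map Complex.ofReal with hB'
  set C' := C.map Complex.ofReal with hC'
  haveI : Invertible M := hinv.invertible
  set T := C' * M⁻¹ * B' with hT
  have hξ0 : (ξ : ℂ) ≠ 0 := Complex.ofReal_ne_zero.mpr hξ.ne'
  set c : ℂ := ((1 / ξ : ℝ) : ℂ) with hc
  have hc' : c = ((ξ : ℂ))⁻¹ := by rw [hc]; push_cast; ring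
  have hBt : B'ᵀ = B'ᴴ := by rw [hB']; exact (hct B).symm
  have hCt : C'ᵀ = C'ᴴ := by rw [hC']; exact (hct C).symm
  -- the bottom-right block is -Mᴴ
  have hstar : ∀ i : Fin m,
      star (Complex.exp (-(ω * Complex.I * (r i)))) = Complex.exp (ω * Complex.I * (r i)) := by
    intro i
    rw [Complex.star_def, ← Complex.exp_conj]
    congr 1
    simp [Complex.conj_I]
    try ring
  have hsI : star ((ω : ℂ) * Complex.I) = -((ω : ℂ) * Complex.I) := by
    simp [Complex.star_def, Complex.conj_I]
  have hN : (ω * Complex.I) • (E.map Complex.ofReal)ᵀ + (A0.map Complex.ofReal)ᵀ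
      + ∑ i, Complex.exp (ω * Complex.I * (r i)) • ((A i).map Complex.ofReal)ᵀ
      = -Mᴴ := by
    rw [hM]
    rw [Matrix.conjTranspose_sub, Matrix.conjTranspose_sub, Matrix.conjTranspose_smul,
      Matrix.conjTranspose_sum]
    simp only [Matrix.conjTranspose_smul, hct, hstar, hsI]
    module
  -- the eigenvalue condition as a determinant condition
  have key1 : (∃ v : Fin p → ℂ, v ≠ 0 ∧ (Tᴴ * T) *ᵥ v = ((ξ : ℂ) ^ 2) • v)
      ↔ (Tᴴ * T - ((ξ : ℂ) ^ 2) • 1).det = 0 := by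
    rw [← Matrix.exists_mulVec_eq_zero_iff]
    apply exists_congr
    intro v
    rw [Matrix.sub_mulVec, Matrix.smul_mulVec, Matrix.one_mulVec, sub_eq_zero]
  rw [key1, hN]
  -- Schur complement
  rw [Matrix.det_fromBlocks₁₁, Matrix.invOf_eq_nonsing_inv]
  have hdetM : M.det ≠ 0 := (Matrix.isUnit_iff_isUnit_det M).mp hinv |>.ne_zero
  have hdetMH : (Mᴴ).det ≠ 0 := (Matrix.isUnit_det_of_invertible Mᴴ).ne_zero
  have hMM : (Mᴴ)⁻¹ * Mᴴ = 1 := Matrix.nonsing_inv_mul Mᴴ (Matrix.isUnit_det_of_invertible Mᴴ)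
  have e1 : -Mᴴ - c • (C'ᵀ * C') * M⁻¹ * (-c • (B' * B'ᵀ))
      = (-1 : ℂ) • (((1 : Matrix (Fin n) (Fin n) ℂ)
          - (c * c) • (C'ᴴ * (T * (B'ᴴ * (Mᴴ)⁻¹)))) * Mᴴ) := by
    rw [hBt, hCt, hT]
    simp only [Matrix.smul_mul, Matrix.mul_smul, Matrix.sub_mul, Matrix.one_mul,
      Matrix.mul_assoc, hMM, Matrix.mul_one]
    module
  rw [e1]
  have hTH : B'ᴴ * (Mᴴ)⁻¹ * C'ᴴ = Tᴴ := by
    rw [hT]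
    simp [Matrix.conjTranspose_mul, Matrix.conjTranspose_nonsing_inv, Matrix.mul_assoc]
  have e2 : (((1 : Matrix (Fin n) (Fin n) ℂ)
        - (c * c) • (C'ᴴ * (T * (B'ᴴ * (Mᴴ)⁻¹))))).det
      = (((1 : Matrix (Fin p) (Fin p) ℂ) - (c * c) • (Tᴴ * T))).det := by
    rw [det_one_sub_smul_mul (c * c) C'ᴴ (T * (B'ᴴ * (Mᴴ)⁻¹))]
    rw [show T * (B'ᴴ * (Mᴴ)⁻¹) * C'ᴴ = T * (B'ᴴ * (Mᴴ)⁻¹ * C'ᴴ) by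
      simp [Matrix.mul_assoc]]
    rw [hTH]
    exact det_one_sub_smul_mul (c * c) T Tᴴ
  have e3 : Tᴴ * T - ((ξ : ℂ) ^ 2) • (1 : Matrix (Fin p) (Fin p) ℂ)
      = (-(ξ : ℂ) ^ 2) • ((1 : Matrix (Fin p) (Fin p) ℂ) - (c * c) • (Tᴴ * T)) := by
    rw [hc']
    rw [smul_sub, smul_smul]
    rw [show (-(ξ : ℂ) ^ 2) * (((ξ : ℂ))⁻¹ * ((ξ : ℂ))⁻¹) = -1 by
      field_simp]
    module
  rw [e3, Matrix.det_smul, Matrix.det_smul, Matrix.det_mul, e2]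
  have h1 : ((-(ξ:ℂ) ^ 2) ^ p : ℂ) ≠ 0 := pow_ne_zero _ (by simpa using hξ0)
  have h2 : ((-1 : ℂ)) ^ n ≠ 0 := pow_ne_zero _ (by norm_num)
  simp [mul_eq_zero, h1, h2, hdetMH, hdetM]
end
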